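/- Let R be a commutative noetherian local ring, C a semidualizing R-module, and M a finitely generated R-module of finite C-injective dimension. Then C ⊗_R M is a finitely generated R-module of finite injective dimension, and M ≅ Hom_R(C, C ⊗_R M); moreover if M is nonzero then C ⊗_R M is nonzero. -/

import Mathlib

set_option linter.unusedVariables false
open CategoryTheory TensorProduct

/-- `pdLE R n M`: the `R`-module `M` has projective dimension at most `n`,
i.e. it admits a projective resolution of length `n`. -/
def pdLE (R : Type) [CommRing R] : ℕ → (M : Type) → (iM : AddCommGroup M) → (jM : Module R M) → Prop
  | 0, M, iM, jM => Module.Projective R M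
  | n+1, M, iM, jM =>
      ∃ (P : Type) (iP : AddCommGroup P) (jP : Module R P) (f : P →ₗ[R] M),
        Module.Projective R P ∧ Function.Surjective f ∧
          pdLE R n (LinearMap.ker f) inferInstance inferInstance

/-- `idLE R n M`: `M` has injective dimension at most `n`,
i.e. it admits an injective resolution of length `n`. -/
def idLE (R : Type) [CommRing R] : ℕ → (M : Type) → (iM : AddCommGroup M) → (jM : Module R M) → Prop
  | 0, M, iM, jM => Module.Injective R M
  | n+1, M, iM, jM =>
      ∃ (I : Type) (iI : AddCommGroup I) (jI : Module R I) (f : M →ₗ[R] I),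
        Module.Injective R I ∧ Function.Injective f ∧
          idLE R n (I ⧸ LinearMap.range f) inferInstance inferInstance

/-- The projective dimension of `M`, as an element of `ℕ∞` (`⊤` means infinite). -/
noncomputable def projDim (R : Type) [CommRing R] (M : Type) [AddCommGroup M] [Module R M] : ℕ∞ :=
  sInf {n : ℕ∞ | ∃ m : ℕ, n = m ∧ pdLE R m M inferInstance inferInstance}

/-- The injective dimension of `M`, as an element of `ℕ∞`. -/
noncomputable def injDim (R : Type) [CommRing R] (M : Type) [AddCommGroup M] [Module R M] : ℕ∞ :=
  sInf {n : ℕ∞ | ∃ m : ℕ, n = m ∧ idLE R m M inferInstance inferInstance}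

/-- A commutative noetherian (local) ring is Gorenstein if it has finite injective
dimension as a module over itself. -/
def IsGorensteinRing (R : Type) [CommRing R] : Prop :=
  ∃ n : ℕ, idLE R n R inferInstance inferInstance

/-- `extGroup R M N i` : the `i`-th Ext module `Ext^i_R(M,N)`. -/
noncomputable def extGroup (R : Type) [CommRing R] (M N : Type) [AddCommGroup M] [Module R M]
    [AddCommGroup N] [Module R N] (i : ℕ) : ModuleCat R :=
  ((Ext R (ModuleCat R) i).obj (Opposite.op (ModuleCat.of R M))).obj (ModuleCat.of R N)

/-- `torGroup R M N i` : the `i`-th Tor module `Tor_i^R(M,N)`. -/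
noncomputable def torGroup (R : Type) [CommRing R] (M N : Type) [AddCommGroup M] [Module R M]
    [AddCommGroup N] [Module R N] (i : ℕ) : ModuleCat R :=
  ((Tor (ModuleCat R) i).obj (ModuleCat.of R M)).obj (ModuleCat.of R N)

/-- `C` is a semidualizing `R`-module: it is finitely generated, the homothety map
`R → Hom_R(C,C)` is bijective, and `Ext^i_R(C,C) = 0` for all `i > 0`. -/
def IsSemidualizing (R : Type) [CommRing R] (C : Type) [AddCommGroup C] [Module R C] : Prop :=
  Module.Finite R C ∧ Function.Bijective (LinearMap.lsmul R C) ∧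
    ∀ i : ℕ, 0 < i → Subsingleton (extGroup R C C i)

/-- `CpdLE R C n M` : `M` has `C`-projective dimension at most `n`, i.e. there is an exact
sequence `0 → C⊗Pₙ → ⋯ → C⊗P₀ → M → 0` with each `Pᵢ` projective. -/
def CpdLE (R C : Type) [CommRing R] [AddCommGroup C] [Module R C] :
    ℕ → (M : Type) → (iM : AddCommGroup M) → (jM : Module R M) → Prop
  | 0, M, iM, jM =>
      ∃ (P : Type) (iP : AddCommGroup P) (jP : Module R P),
        Module.Projective R P ∧ Nonempty ((TensorProduct R C P) ≃ₗ[R] M)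
  | n+1, M, iM, jM =>
      ∃ (P : Type) (iP : AddCommGroup P) (jP : Module R P)
        (f : TensorProduct R C P →ₗ[R] M),
        Module.Projective R P ∧ Function.Surjective f ∧
          CpdLE R C n (LinearMap.ker f) inferInstance inferInstance

/-- `CidLE R C n M` : `M` has `C`-injective dimension at most `n`, i.e. there is an exact
sequence `0 → M → Hom(C,I⁰) → ⋯ → Hom(C,Iⁿ) → 0` with each `Iⁱ` injective. -/
def CidLE (R C : Type) [CommRing R] [AddCommGroup C] [Module R C] :
    ℕ → (M : Type) → (iM : AddCommGroup M) → (jM : Module R M) → Prop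
  | 0, M, iM, jM =>
      ∃ (I : Type) (iI : AddCommGroup I) (jI : Module R I),
        Module.Injective R I ∧ Nonempty (M ≃ₗ[R] (C →ₗ[R] I))
  | n+1, M, iM, jM =>
      ∃ (I : Type) (iI : AddCommGroup I) (jI : Module R I)
        (f : M →ₗ[R] (C →ₗ[R] I)),
        Module.Injective R I ∧ Function.Injective f ∧
          CidLE R C n ((C →ₗ[R] I) ⧸ LinearMap.range f) inferInstance inferInstance

/-- The depth of a module over a local ring: the supremum of lengths of `M`-regular
sequences contained in the maximal ideal. -/
noncomputable def rdepth (R : Type) [CommRing R] [IsLocalRing R]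
    (M : Type) [AddCommGroup M] [Module R M] : ℕ∞ :=
  sSup {n : ℕ∞ | ∃ rs : List R, (rs.length : ℕ∞) = n ∧
    (∀ r ∈ rs, r ∈ IsLocalRing.maximalIdeal R) ∧ RingTheory.Sequence.IsRegular M rs}

set_option maxHeartbeats 1600000

open LinearMap Function

namespace AuxSemidual


variable {R : Type} [CommRing R]

/-- Transport `Module.Injective` along a linear equivalence. -/
theorem injective_of_equiv {X Y : Type} [AddCommGroup X] [Module R X] [AddCommGroup Y]
    [Module R Y] (e : X ≃ₗ[R] Y) (hX : Module.Injective R X) : Module.Injective R Y where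
  out A B _ _ _ _ f hf g := by
    obtain ⟨h, hh⟩ := hX.out f hf (e.symm.toLinearMap ∘ₗ g)
    exact ⟨e.toLinearMap ∘ₗ h, fun x => by
      simp only [LinearMap.comp_apply, hh]; simp⟩

/-- `Hom(-, I)` sends an exact pair to an exact pair, for `I` injective. -/
theorem hom_inj_exact {A B D I : Type} [AddCommGroup A] [Module R A] [AddCommGroup B] [Module R B]
    [AddCommGroup D] [Module R D] [AddCommGroup I] [Module R I] (hI : Module.Injective R I)
    (f : A →ₗ[R] B) (g : B →ₗ[R] D) (hfg : Function.Exact f g) :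
    Function.Exact (fun (φ : D →ₗ[R] I) => φ ∘ₗ g) (fun (φ : B →ₗ[R] I) => φ ∘ₗ f) := by
  intro φ
  constructor
  · intro hφ
    -- φ ∘ f = 0, so φ kills range f = ker g; factor through B ⧸ ker g ≃ range g and extend.
    have hker : LinearMap.ker g ≤ LinearMap.ker φ := by
      rw [hfg.linearMap_ker_eq]
      rintro x ⟨a, rfl⟩
      exact congrFun (congrArg (fun (ψ : A →ₗ[R] I) => (ψ : A → I)) hφ) a
    set φ' : (B ⧸ LinearMap.ker g) →ₗ[R] I := Submodule.liftQ _ φ hker with hφ'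
    set e : (B ⧸ LinearMap.ker g) ≃ₗ[R] LinearMap.range g := g.quotKerEquivRange
    obtain ⟨ψ, hψ⟩ := hI.out (LinearMap.range g).subtype Subtype.val_injective
      (φ' ∘ₗ (e.symm : LinearMap.range g →ₗ[R] (B ⧸ LinearMap.ker g)))
    refine ⟨ψ, ?_⟩
    ext b
    have h1 : ψ (g b) = φ' (e.symm ⟨g b, ⟨b, rfl⟩⟩) := hψ ⟨g b, ⟨b, rfl⟩⟩
    have h2 : e.symm ⟨g b, ⟨b, rfl⟩⟩ = Submodule.Quotient.mk b := by
      apply e.injective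
      simp only [LinearEquiv.apply_symm_apply]
      rfl
    simp only [LinearMap.comp_apply, h1, h2]
    rfl
  · rintro ⟨ψ, rfl⟩
    ext a
    simp only [LinearMap.comp_apply, LinearMap.zero_apply]
    rw [hfg.apply_apply_eq_zero a, map_zero]

/-- `Hom(-, I)` sends an injection to a surjection, for `I` injective. -/
theorem hom_inj_surj {A B I : Type} [AddCommGroup A] [Module R A] [AddCommGroup B] [Module R B]
    [AddCommGroup I] [Module R I] (hI : Module.Injective R I)
    (f : A →ₗ[R] B) (hf : Function.Injective f) :
    Function.Surjective (fun (φ : B →ₗ[R] I) => φ ∘ₗ f) := by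
  intro g
  obtain ⟨h, hh⟩ := hI.out f hf g
  exact ⟨h, LinearMap.ext hh⟩

/-- Transfer exactness backwards along commuting squares with bijective verticals. -/
theorem exact_of_squares {A B D A' B' D' : Type}
    [AddCommGroup A] [Module R A] [AddCommGroup B] [Module R B] [AddCommGroup D] [Module R D]
    [AddCommGroup A'] [Module R A'] [AddCommGroup B'] [Module R B'] [AddCommGroup D'] [Module R D']
    (f : A →ₗ[R] B) (g : B →ₗ[R] D) (f' : A' →ₗ[R] B') (g' : B' →ₗ[R] D')
    (α : A →ₗ[R] A') (β : B →ₗ[R] B') (γ : D →ₗ[R] D')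
    (hα : Function.Surjective α) (hβ : Function.Bijective β) (hγ : Function.Injective γ)
    (sq1 : β ∘ₗ f = f' ∘ₗ α) (sq2 : γ ∘ₗ g = g' ∘ₗ β)
    (h : Function.Exact f' g') : Function.Exact f g := by
  intro b
  constructor
  · intro hb
    have : g' (β b) = 0 := by
      have := congrFun (congrArg (fun (ψ : B →ₗ[R] D') => (ψ : B → D')) sq2) b
      simp only [LinearMap.comp_apply] at this
      rw [← this, hb, map_zero]
    obtain ⟨a', ha'⟩ := (h (β b)).1 this
    obtain ⟨a, rfl⟩ := hα a'
    refine ⟨a, hβ.1 ?_⟩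
    have := congrFun (congrArg (fun (ψ : A →ₗ[R] B') => (ψ : A → B')) sq1) a
    simp only [LinearMap.comp_apply] at this
    rw [this, ha']
  · rintro ⟨a, rfl⟩
    apply hγ
    have h2 := congrFun (congrArg (fun (ψ : B →ₗ[R] D') => (ψ : B → D')) sq2) (f a)
    have h1 := congrFun (congrArg (fun (ψ : A →ₗ[R] B') => (ψ : A → B')) sq1) a
    simp only [LinearMap.comp_apply] at h1 h2
    rw [h2, h1, h.apply_apply_eq_zero, map_zero]


/-- Cokernel comparison: two right exact rows, with the left vertical surjective and middle
vertical bijective, give a bijective right vertical. -/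
theorem bijective_of_cokernel_squares {A B D A' B' D' : Type}
    [AddCommGroup A] [Module R A] [AddCommGroup B] [Module R B] [AddCommGroup D] [Module R D]
    [AddCommGroup A'] [Module R A'] [AddCommGroup B'] [Module R B'] [AddCommGroup D'] [Module R D']
    (f : A →ₗ[R] B) (g : B →ₗ[R] D) (f' : A' →ₗ[R] B') (g' : B' →ₗ[R] D')
    (hfg : Function.Exact f g) (hg : Function.Surjective g)
    (hfg' : Function.Exact f' g') (hg' : Function.Surjective g')
    (α : A →ₗ[R] A') (β : B →ₗ[R] B') (γ : D →ₗ[R] D')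
    (hα : Function.Surjective α) (hβ : Function.Bijective β)
    (sq1 : β ∘ₗ f = f' ∘ₗ α) (sq2 : γ ∘ₗ g = g' ∘ₗ β) :
    Function.Bijective γ := by
  have sq1' : ∀ a, β (f a) = f' (α a) := fun a =>
    congrFun (congrArg (fun (ψ : A →ₗ[R] B') => (ψ : A → B')) sq1) a
  have sq2' : ∀ b, γ (g b) = g' (β b) := fun b =>
    congrFun (congrArg (fun (ψ : B →ₗ[R] D') => (ψ : B → D')) sq2) b
  constructor
  · -- injectivity
    intro d₁ d₂ hd
    obtain ⟨b₁, rfl⟩ := hg d₁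
    obtain ⟨b₂, rfl⟩ := hg d₂
    have : g' (β b₁ - β b₂) = 0 := by
      rw [map_sub, ← sq2' b₁, ← sq2' b₂, hd, sub_self]
    obtain ⟨a', ha'⟩ := (hfg' _).1 this
    obtain ⟨a, rfl⟩ := hα a'
    have : β (b₁ - b₂ - f a) = 0 := by
      rw [map_sub, map_sub, sq1' a, ha']; abel
    have hb : b₁ - b₂ = f a := by
      have := hβ.1 (a₁ := b₁ - b₂ - f a) (a₂ := 0) (by rw [this, map_zero])
      have h2 : b₁ - b₂ - f a = 0 := this
      linear_combination (norm := abel) h2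
    have : g (b₁ - b₂) = 0 := by rw [hb, hfg.apply_apply_eq_zero]
    rw [map_sub] at this
    linear_combination (norm := abel) this
  · -- surjectivity
    intro d'
    obtain ⟨b', rfl⟩ := hg' d'
    obtain ⟨b, rfl⟩ := hβ.2 b'
    exact ⟨g b, sq2' b⟩



variable {R : Type} [CommRing R]

section Eta

variable (X Y I : Type) [AddCommGroup X] [Module R X] [AddCommGroup Y] [Module R Y]
  [AddCommGroup I] [Module R I]

/-- The natural map `X ⊗ Hom(Y,I) → Hom(Hom(X,Y), I)`, `x ⊗ f ↦ (g ↦ f (g x))`. -/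
noncomputable def eta : X ⊗[R] (Y →ₗ[R] I) →ₗ[R] ((X →ₗ[R] Y) →ₗ[R] I) :=
  TensorProduct.lift (LinearMap.mk₂ R
    (fun x f => f ∘ₗ (LinearMap.applyₗ x : (X →ₗ[R] Y) →ₗ[R] Y))
    (fun x₁ x₂ f => by ext g; simp)
    (fun c x f => by ext g; simp)
    (fun x f₁ f₂ => by ext g; simp)
    (fun c x f => by ext g; simp))

variable {X Y I}

@[simp] lemma eta_tmul (x : X) (f : Y →ₗ[R] I) (g : X →ₗ[R] Y) :
    eta X Y I (x ⊗ₜ[R] f) g = f (g x) := rfl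

/-- Naturality of `eta` in the first variable. -/
lemma eta_natural {X' : Type} [AddCommGroup X'] [Module R X'] (u : X' →ₗ[R] X) :
    (eta X Y I) ∘ₗ (LinearMap.rTensor (Y →ₗ[R] I) u)
      = (LinearMap.lcomp R I (LinearMap.lcomp R Y u)) ∘ₗ (eta X' Y I) := by
  apply TensorProduct.ext'
  intro x f
  rfl

/-- The coordinate map `Y →ₗ Hom(Fin m → R, Y)`, `y ↦ (x ↦ x i • y)`. -/
def coordmap (Y : Type) [AddCommGroup Y] [Module R Y] (m : ℕ) (i : Fin m) :
    Y →ₗ[R] ((Fin m → R) →ₗ[R] Y) where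
  toFun y := (LinearMap.proj i : (Fin m → R) →ₗ[R] R).smulRight y
  map_add' y₁ y₂ := LinearMap.ext fun x => by
    show x i • (y₁ + y₂) = x i • y₁ + x i • y₂
    rw [smul_add]
  map_smul' c y := LinearMap.ext fun x => by
    show x i • (c • y) = c • (x i • y)
    rw [smul_comm]

@[simp] lemma coordmap_apply {Y : Type} [AddCommGroup Y] [Module R Y] {m : ℕ} (i : Fin m)
    (y : Y) (x : Fin m → R) : coordmap Y m i y x = x i • y := rfl

variable (Y I) in
/-- For finite free `X = Fin m → R`, `eta` is bijective. -/
lemma eta_bijective_pi (m : ℕ) :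
    Function.Bijective (eta (R := R) (Fin m → R) Y I) := by
  classical
  have hcoordadd : ∀ (Φ₁ Φ₂ : ((Fin m → R) →ₗ[R] Y) →ₗ[R] I) (i : Fin m),
      (Φ₁ + Φ₂) ∘ₗ coordmap Y m i = Φ₁ ∘ₗ coordmap Y m i + Φ₂ ∘ₗ coordmap Y m i :=
    fun _ _ _ => by ext y; rfl
  have hcoordsmul : ∀ (c : R) (Φ : ((Fin m → R) →ₗ[R] Y) →ₗ[R] I) (i : Fin m),
      (c • Φ) ∘ₗ coordmap Y m i = c • (Φ ∘ₗ coordmap Y m i) := fun _ _ _ => by ext y; rfl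
  set ζ : (((Fin m → R) →ₗ[R] Y) →ₗ[R] I) →ₗ[R] (Fin m → R) ⊗[R] (Y →ₗ[R] I) :=
    { toFun := fun Φ => ∑ i, (Pi.single i (1:R)) ⊗ₜ[R] (Φ ∘ₗ coordmap Y m i)
      map_add' := fun Φ₁ Φ₂ => by
        simp only [hcoordadd, TensorProduct.tmul_add, Finset.sum_add_distrib]
      map_smul' := fun c Φ => by
        simp only [RingHom.id_apply, hcoordsmul, TensorProduct.tmul_smul, ← Finset.smul_sum] }
    with hζ
  have hsingle : ∀ (x : Fin m → R) (i : Fin m),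
      x i • (Pi.single i (1:R) : Fin m → R) = Pi.single i (x i) := by
    intro x i
    ext j
    by_cases h : j = i
    · subst h; simp
    · simp [Pi.single_apply, h]
  refine Function.bijective_iff_has_inverse.2 ⟨ζ, ?_, ?_⟩
  · -- left inverse
    intro t
    induction t with
    | zero => simp
    | tmul x f =>
      have h1 : ∀ i : Fin m, (eta (R := R) (Fin m → R) Y I (x ⊗ₜ[R] f)) ∘ₗ coordmap Y m i
          = x i • f := by
        intro i
        ext y
        show f ((coordmap Y m i y) x) = (x i • f) y
        rw [coordmap_apply, map_smul]
        rfl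
      show ζ (eta (R := R) (Fin m → R) Y I (x ⊗ₜ[R] f)) = x ⊗ₜ[R] f
      rw [hζ]
      simp only [LinearMap.coe_mk, AddHom.coe_mk]
      calc (∑ i, (Pi.single i (1:R)) ⊗ₜ[R]
              ((eta (R := R) (Fin m → R) Y I (x ⊗ₜ[R] f)) ∘ₗ coordmap Y m i))
          = ∑ i, (Pi.single i (1:R)) ⊗ₜ[R] (x i • f) := by
            refine Finset.sum_congr rfl fun i _ => ?_; rw [h1]
        _ = ∑ i, (Pi.single i (x i)) ⊗ₜ[R] f := by
            refine Finset.sum_congr rfl fun i _ => ?_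
            rw [TensorProduct.tmul_smul, TensorProduct.smul_tmul', hsingle]
        _ = x ⊗ₜ[R] f := by rw [← TensorProduct.sum_tmul, Finset.univ_sum_single]
    | add t₁ t₂ h₁ h₂ => simp only [map_add, h₁, h₂]
  · -- right inverse
    intro Φ
    ext g
    show eta (R := R) (Fin m → R) Y I
      (∑ i, (Pi.single i (1:R)) ⊗ₜ[R] (Φ ∘ₗ coordmap Y m i)) g = Φ g
    rw [map_sum]
    have key : ∀ i, (eta (R := R) (Fin m → R) Y I
        ((Pi.single i (1:R)) ⊗ₜ[R] (Φ ∘ₗ coordmap Y m i))) g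
        = Φ (coordmap Y m i (g (Pi.single i 1))) := fun i => rfl
    simp only [LinearMap.sum_apply, key]
    rw [← map_sum]
    congr 1
    refine LinearMap.ext fun x => ?_
    rw [LinearMap.coe_sum, Finset.sum_apply]
    have key2 : ∀ i, (coordmap Y m i (g (Pi.single i (1:R)))) x = g (Pi.single i (x i)) := by
      intro i
      rw [coordmap_apply, ← map_smul, hsingle]
    rw [Finset.sum_congr rfl fun i _ => key2 i, ← map_sum, Finset.univ_sum_single]

end Eta

section Ev

variable (C I : Type) [AddCommGroup C] [Module R C] [AddCommGroup I] [Module R I]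

/-- Evaluation `C ⊗ Hom(C,I) → I`. -/
noncomputable def ev : C ⊗[R] (C →ₗ[R] I) →ₗ[R] I :=
  TensorProduct.lift (LinearMap.id (M := C →ₗ[R] I)).flip

variable {C I}

@[simp] lemma ev_tmul (c : C) (f : C →ₗ[R] I) : ev C I (c ⊗ₜ[R] f) = f c := rfl

end Ev



variable (R : Type) [CommRing R]

structure FreeRes (C : Type) [AddCommGroup C] [Module R C] where
  k : ℕ → ℕ
  d : ∀ n : ℕ, ((Fin (k (n+1)) → R) →ₗ[R] (Fin (k n) → R))
  ε : (Fin (k 0) → R) →ₗ[R] C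
  hε : Function.Surjective ε
  hd0 : Function.Exact (d 0) ε
  hd : ∀ n : ℕ, Function.Exact (d (n+1)) (d n)

section Bridge

open CategoryTheory

variable {R} {C : Type} [AddCommGroup C] [Module R C]

/-- The chain complex of a finite free resolution. -/
noncomputable def resComplex (res : FreeRes R C) : ChainComplex (ModuleCat R) ℕ :=
  ChainComplex.of (fun n => ModuleCat.of R (Fin (res.k n) → R))
    (fun n => ModuleCat.ofHom (res.d n))
    (fun n => by
      refine ModuleCat.hom_ext (LinearMap.ext fun x => ?_)
      exact (res.hd n).apply_apply_eq_zero x)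

lemma resComplex_d (res : FreeRes R C) (n : ℕ) :
    (resComplex res).d (n+1) n = ModuleCat.ofHom (res.d n) :=
  ChainComplex.of_d (fun n => ModuleCat.of R (Fin (res.k n) → R))
    (fun n => ModuleCat.ofHom (res.d n)) n

instance (res : FreeRes R C) (n : ℕ) : Projective ((resComplex res).X n) := by
  have : Module.Projective R (Fin (res.k n) → R) := inferInstance
  exact (IsProjective.iff_projective _).mp this

/-- The projective resolution packaged categorically. -/
noncomputable def resProjRes (res : FreeRes R C) :
    ProjectiveResolution (ModuleCat.of R C) where
  complex := resComplex res
  π := (ChainComplex.toSingle₀Equiv _ _).symm ⟨ModuleCat.ofHom res.ε, by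
    rw [resComplex_d]
    refine ModuleCat.hom_ext (LinearMap.ext fun x => ?_)
    exact res.hd0.apply_apply_eq_zero x⟩
  quasiIso := ⟨fun n => by
    cases n with
    | zero =>
      rw [ChainComplex.quasiIsoAt₀_iff, ShortComplex.quasiIso_iff_of_zeros']
      · constructor
        · rw [ShortComplex.moduleCat_exact_iff]
          intro (x : Fin (res.k 0) → R) hx
          have hx' : res.ε x = 0 := by
            have h := ChainComplex.toSingle₀Equiv_symm_apply_f_zero (C := resComplex res)
                (X := ModuleCat.of R C) (ModuleCat.ofHom res.ε) (by
                  rw [resComplex_d]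
                  refine ModuleCat.hom_ext (LinearMap.ext fun x => ?_)
                  exact res.hd0.apply_apply_eq_zero x)
            have h' : ∀ z, (((resComplex res).toSingle₀Equiv (ModuleCat.of R C)).symm
                ⟨ModuleCat.ofHom res.ε, _⟩).f 0 z = res.ε z := fun z => by rw [h]; rfl
            rw [← h' x]; exact hx
          obtain ⟨y, hy⟩ := (res.hd0 x).1 hx'
          refine ⟨y, ?_⟩
          show ((resComplex res).d 1 0) y = x
          rw [resComplex_d]
          exact hy
        · rw [ModuleCat.epi_iff_surjective]
          intro y
          obtain ⟨x, hx⟩ := res.hε y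
          refine ⟨x, ?_⟩
          show (((resComplex res).toSingle₀Equiv (ModuleCat.of R C)).symm
            ⟨ModuleCat.ofHom res.ε, _⟩).f 0 x = y
          exact hx
      · rfl
      · rfl
      · rfl
    | succ n =>
      rw [quasiIsoAt_iff_exactAt']
      · rw [HomologicalComplex.exactAt_iff' _ (n+2) (n+1) n (by simp) (by simp)]
        rw [ShortComplex.moduleCat_exact_iff]
        intro (x : Fin (res.k (n+1)) → R) hx
        have hx' : res.d n x = 0 := by
          have h := resComplex_d res n
          have h' : ∀ z, (resComplex res).d (n+1) n z = res.d n z := fun z => by rw [h]; rfl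
          rw [← h' x]; exact hx
        obtain ⟨y, hy⟩ := ((res.hd n) x).1 hx'
        refine ⟨y, ?_⟩
        show ((resComplex res).d (n+2) (n+1)) y = x
        rw [resComplex_d]
        exact hy
      · apply ChainComplex.exactAt_succ_single_obj⟩

/-- Concrete exactness of the `Hom(-, C)` complex in positive degrees, out of vanishing
of the `Ext` groups. -/
theorem homres_exact (res : FreeRes R C)
    (hvanish : ∀ i : ℕ, 0 < i → Subsingleton (extGroup R C C i)) (n : ℕ) :
    Function.Exact
      (fun (φ : (Fin (res.k n) → R) →ₗ[R] C) => φ ∘ₗ res.d n)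
      (fun (φ : (Fin (res.k (n+1)) → R) →ₗ[R] C) => φ ∘ₗ res.d (n+1)) := by
  classical
  set P := resProjRes res with hP
  have hsub : Subsingleton ((((Ext R (ModuleCat R) (n+1)).obj
      (Opposite.op (ModuleCat.of R C))).obj (ModuleCat.of R C)) : Type) :=
    hvanish (n+1) (Nat.succ_pos n)
  have hzero : Limits.IsZero ((P.complex.linearYonedaObj R (ModuleCat.of R C)).homology (n+1)) := by
    refine Limits.IsZero.of_iso ?_ (P.isoExt (n+1) (ModuleCat.of R C)).symm
    exact @ModuleCat.isZero_of_subsingleton R _ _ hsub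
  have hexact : (P.complex.linearYonedaObj R (ModuleCat.of R C)).ExactAt (n+1) :=
    (HomologicalComplex.exactAt_iff_isZero_homology _ _).2 hzero
  rw [HomologicalComplex.exactAt_iff' _ n (n+1) (n+2) (by simp) (by simp)] at hexact
  rw [ShortComplex.moduleCat_exact_iff] at hexact
  have lyo_d_apply : ∀ (i j : ℕ) (φ : (resComplex res).X j ⟶ ModuleCat.of R C),
      ((resComplex res).linearYonedaObj R (ModuleCat.of R C)).d j i φ
        = (resComplex res).d i j ≫ φ := by
    intro i j φ
    rw [ChainComplex.linearYonedaObj_d]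
    rfl
  intro φ
  constructor
  · intro hφ
    have hg : (HomologicalComplex.sc' (P.complex.linearYonedaObj R (ModuleCat.of R C))
        n (n+1) (n+2)).g (ModuleCat.ofHom φ) = 0 := by
      refine (lyo_d_apply (n+2) (n+1) (ModuleCat.ofHom φ)).trans ?_
      rw [show (resComplex res).d (n+2) (n+1) = ModuleCat.ofHom (res.d (n+1)) from
        resComplex_d res (n+1)]
      exact ModuleCat.hom_ext hφ
    obtain ⟨ψ, hψ⟩ := hexact (ModuleCat.ofHom φ) hg
    refine ⟨ψ.hom, ?_⟩
    have h2 : (resComplex res).d (n+1) n ≫ ψ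
      = ModuleCat.ofHom φ := (lyo_d_apply (n+1) n ψ).symm.trans hψ
    rw [show (resComplex res).d (n+1) n = ModuleCat.ofHom (res.d n) from
      resComplex_d res n] at h2
    exact congrArg ModuleCat.Hom.hom h2
  · rintro ⟨ψ, rfl⟩
    have hzero2 : res.d n ∘ₗ res.d (n+1) = 0 :=
      LinearMap.ext fun x => (res.hd n).apply_apply_eq_zero x
    show (ψ ∘ₗ res.d n) ∘ₗ res.d (n+1) = 0
    rw [LinearMap.comp_assoc, hzero2, LinearMap.comp_zero]

end Bridge

variable (R : Type) [CommRing R]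

variable [IsNoetherianRing R]

lemma exists_cover {m : ℕ} (K : Submodule R (Fin m → R)) :
    ∃ (k : ℕ) (f : (Fin k → R) →ₗ[R] (Fin m → R)), LinearMap.range f = K := by
  haveI : Module.Finite R K := Module.Finite.iff_fg.mpr (IsNoetherian.noetherian K)
  obtain ⟨k, f, hf⟩ := Module.Finite.exists_fin' R K
  refine ⟨k, K.subtype ∘ₗ f, ?_⟩
  rw [LinearMap.range_comp, LinearMap.range_eq_top.mpr hf, Submodule.map_subtype_top]

/-- Choose a finite free cover of a submodule of a finite free module. -/
noncomputable def pick {m : ℕ} (K : Submodule R (Fin m → R)) :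
    Σ' (k : ℕ) (f : (Fin k → R) →ₗ[R] (Fin m → R)), LinearMap.range f = K :=
  ⟨(exists_cover R K).choose, (exists_cover R K).choose_spec.choose,
    (exists_cover R K).choose_spec.choose_spec⟩

variable (C : Type) [AddCommGroup C] [Module R C] [Module.Finite R C]

/-- Choose a finite free cover of `C`. -/
noncomputable def eps0 : Σ' (k : ℕ) (f : (Fin k → R) →ₗ[R] C), Function.Surjective f :=
  ⟨(Module.Finite.exists_fin' R C).choose, (Module.Finite.exists_fin' R C).choose_spec.choose,
    (Module.Finite.exists_fin' R C).choose_spec.choose_spec⟩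

/-- The syzygy tower. -/
noncomputable def resAux : ℕ → Σ m : ℕ, Submodule R (Fin m → R)
  | 0 => ⟨(eps0 R C).1, LinearMap.ker (eps0 R C).2.1⟩
  | n+1 => ⟨(pick R (resAux n).2).1, LinearMap.ker (pick R (resAux n).2).2.1⟩

/-- A finite free resolution of a finitely generated module over a noetherian ring. -/
noncomputable def freeRes : FreeRes R C where
  k n := (resAux R C n).1
  d n := (pick R (resAux R C n).2).2.1
  ε := (eps0 R C).2.1
  hε := (eps0 R C).2.2
  hd0 := by
    exact (LinearMap.exact_iff (f := (pick R (resAux R C 0).2).2.1)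
      (g := (eps0 R C).2.1)).mpr ((pick R (resAux R C 0).2).2.2).symm
  hd n := by
    exact (LinearMap.exact_iff (f := (pick R (resAux R C (n+1)).2).2.1)
      (g := (pick R (resAux R C n).2).2.1)).mpr ((pick R (resAux R C (n+1)).2).2.2).symm







variable {R : Type} [CommRing R]

/-- Pointwise commutation of `rTensor` and `lTensor`. -/
lemma rl_comm {A B X Y : Type} [AddCommGroup A] [Module R A] [AddCommGroup B] [Module R B]
    [AddCommGroup X] [Module R X] [AddCommGroup Y] [Module R Y]
    (v : A →ₗ[R] B) (u : X →ₗ[R] Y) (z : A ⊗[R] X) :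
    LinearMap.rTensor Y v (LinearMap.lTensor A u z)
      = LinearMap.lTensor B u (LinearMap.rTensor X v z) := by
  have h1 : (LinearMap.rTensor Y v) ∘ₗ (LinearMap.lTensor A u) = TensorProduct.map v u :=
    LinearMap.rTensor_comp_lTensor A v u
  have h2 : (LinearMap.lTensor B u) ∘ₗ (LinearMap.rTensor X v) = TensorProduct.map v u :=
    LinearMap.lTensor_comp_rTensor A v u
  have := congrFun (congrArg (fun (ψ : A ⊗[R] X →ₗ[R] B ⊗[R] Y) => (ψ : A ⊗[R] X → B ⊗[R] Y))
    (h1.trans h2.symm)) z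
  exact this

lemma lTensor_bijective_of_bijective (P : Type) [AddCommGroup P] [Module R P]
    {X Y : Type} [AddCommGroup X] [Module R X] [AddCommGroup Y] [Module R Y]
    (u : X →ₗ[R] Y) (hu : Function.Bijective u) :
    Function.Bijective (LinearMap.lTensor P u) := by
  let e := LinearEquiv.ofBijective u hu
  have he : ∀ x, e x = u x := fun x => rfl
  have h : (LinearEquiv.lTensor P e).toLinearMap = LinearMap.lTensor P u :=
    TensorProduct.ext' (fun p x => by
      rw [show ((LinearEquiv.lTensor P e).toLinearMap) (p ⊗ₜ[R] x) = p ⊗ₜ[R] (e x) from rfl,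
        he x]
      rfl)
  have h2 : ⇑(LinearMap.lTensor P u) = ⇑(LinearEquiv.lTensor P e) := by
    rw [← h]; rfl
  rw [h2]
  exact (LinearEquiv.lTensor P e).bijective

/-- Postcomposition with an injective map is injective on Hom modules. -/
lemma postcomp_injective {A B P : Type} [AddCommGroup A] [Module R A] [AddCommGroup B]
    [Module R B] [AddCommGroup P] [Module R P] (u : A →ₗ[R] B) (hu : Function.Injective u) :
    Function.Injective (fun (φ : P →ₗ[R] A) => u ∘ₗ φ) := by
  intro φ₁ φ₂ h
  refine LinearMap.ext fun p => hu ?_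
  exact congrFun (congrArg (fun (ψ : P →ₗ[R] B) => (ψ : P → B)) h) p

lemma postcomp_bijective {A B P : Type} [AddCommGroup A] [Module R A] [AddCommGroup B]
    [Module R B] [AddCommGroup P] [Module R P] (u : A →ₗ[R] B) (hu : Function.Bijective u) :
    Function.Bijective (fun (φ : P →ₗ[R] A) => u ∘ₗ φ) := by
  let e := LinearEquiv.ofBijective u hu
  refine ⟨postcomp_injective u hu.1, fun ψ => ⟨e.symm.toLinearMap ∘ₗ ψ, ?_⟩⟩
  refine LinearMap.ext fun p => ?_
  show u (e.symm (ψ p)) = ψ p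
  have : e (e.symm (ψ p)) = ψ p := e.apply_symm_apply (ψ p)
  rw [LinearEquiv.ofBijective_apply] at this
  exact this

/-- `Hom(C, -)` is "exact at the middle" on a left exact pair. -/
lemma postcomp_exact {A B D P : Type} [AddCommGroup A] [Module R A] [AddCommGroup B]
    [Module R B] [AddCommGroup D] [Module R D] [AddCommGroup P] [Module R P]
    (u : A →ₗ[R] B) (v : B →ₗ[R] D) (hu : Function.Injective u) (huv : Function.Exact u v)
    (φ : P →ₗ[R] B) (hφ : v ∘ₗ φ = 0) : ∃ ψ : P →ₗ[R] A, u ∘ₗ ψ = φ := by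
  have hrange : ∀ p, φ p ∈ LinearMap.range u := by
    intro p
    have : v (φ p) = 0 := congrFun (congrArg (fun (ψ : P →ₗ[R] D) => (ψ : P → D)) hφ) p
    exact (huv (φ p)).1 this
  let e := LinearEquiv.ofInjective u hu
  refine ⟨e.symm.toLinearMap ∘ₗ (φ.codRestrict (LinearMap.range u) hrange), ?_⟩
  refine LinearMap.ext fun p => ?_
  show u (e.symm ⟨φ p, hrange p⟩) = φ p
  have : (⟨φ p, hrange p⟩ : LinearMap.range u) = e (e.symm ⟨φ p, hrange p⟩) :=
    (e.apply_symm_apply _).symm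
  have h2 := congrArg Subtype.val this
  have h3 : (e (e.symm ⟨φ p, hrange p⟩) : B) = u (e.symm ⟨φ p, hrange p⟩) := rfl
  rw [h3] at h2
  exact h2.symm

/-- Bijectivity of the dual of a bijective map. -/
lemma dual_bijective {A B I : Type} [AddCommGroup A] [Module R A] [AddCommGroup B]
    [Module R B] [AddCommGroup I] [Module R I] (v : A →ₗ[R] B) (hv : Function.Bijective v) :
    Function.Bijective (fun (Ψ : B →ₗ[R] I) => Ψ ∘ₗ v) := by
  let e := LinearEquiv.ofBijective v hv
  refine ⟨?_, ?_⟩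
  · intro Ψ₁ Ψ₂ h
    refine LinearMap.ext fun b => ?_
    have := congrFun (congrArg (fun (ψ : A →ₗ[R] I) => (ψ : A → I)) h) (e.symm b)
    have hb : v (e.symm b) = b := by
      have := e.apply_symm_apply b
      rw [LinearEquiv.ofBijective_apply] at this
      exact this
    simpa [hb] using this
  · intro Φ
    refine ⟨Φ ∘ₗ e.symm.toLinearMap, LinearMap.ext fun a => ?_⟩
    show Φ (e.symm (v a)) = Φ a
    congr 1
    have : e.symm (e a) = a := e.symm_apply_apply a
    rw [LinearEquiv.ofBijective_apply] at this
    exact this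

/-- Transport `idLE` along a linear equivalence. -/
theorem idLE_congr : ∀ (n : ℕ) (X Y : Type) (iX : AddCommGroup X) (jX : Module R X)
    (iY : AddCommGroup Y) (jY : Module R Y) (e : X ≃ₗ[R] Y),
    idLE R n X iX jX → idLE R n Y iY jY := by
  intro n
  induction n with
  | zero =>
    intro X Y iX jX iY jY e h
    exact injective_of_equiv e h
  | succ n ih =>
    rintro X Y iX jX iY jY e ⟨I, iI, jI, f, hI, hf, hq⟩
    refine ⟨I, iI, jI, f ∘ₗ e.symm.toLinearMap, hI, ?_, ?_⟩
    · exact hf.comp e.symm.injective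
    · have hrange : LinearMap.range (f ∘ₗ e.symm.toLinearMap) = LinearMap.range f := by
        rw [LinearMap.range_comp]
        rw [LinearEquiv.range]
        exact Submodule.map_top f ▸ (LinearMap.range_eq_map f).symm
      exact ih _ _ _ _ _ _ (Submodule.quotEquivOfEq _ _ hrange.symm) hq


section Tor

variable {R : Type} [CommRing R] {C : Type} [AddCommGroup C] [Module R C]

/-- Vanishing of all higher Tor of `C` against `M`, via the chosen resolution. -/
def TorVanish (res : FreeRes R C) (M : Type) [AddCommGroup M] [Module R M] : Prop :=
  ∀ n : ℕ, Function.Exact (LinearMap.rTensor M (res.d (n+1))) (LinearMap.rTensor M (res.d n))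

variable (res : FreeRes R C)

lemma eps_comp_d_zero : res.ε ∘ₗ res.d 0 = 0 :=
  LinearMap.ext fun x => res.hd0.apply_apply_eq_zero x

lemma d_comp_d_zero (n : ℕ) : res.d n ∘ₗ res.d (n+1) = 0 :=
  LinearMap.ext fun x => (res.hd n).apply_apply_eq_zero x

/-- Left exactness of `Hom(-, C)` at the augmentation spot. -/
lemma hom_left_exact :
    Function.Exact (fun (ψ : C →ₗ[R] C) => ψ ∘ₗ res.ε)
      (fun (φ : (Fin (res.k 0) → R) →ₗ[R] C) => φ ∘ₗ res.d 0) := by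
  intro φ
  constructor
  · intro hφ
    have hker : LinearMap.ker res.ε ≤ LinearMap.ker φ := by
      intro x hx
      rw [res.hd0.linearMap_ker_eq] at hx
      obtain ⟨y, rfl⟩ := hx
      exact congrFun (congrArg (fun (ψ : _ →ₗ[R] C) => (ψ : _ → C)) hφ) y
    let φ' := Submodule.liftQ (LinearMap.ker res.ε) φ hker
    let e := res.ε.quotKerEquivOfSurjective res.hε
    refine ⟨φ' ∘ₗ e.symm.toLinearMap, LinearMap.ext fun x => ?_⟩
    show φ' (e.symm (res.ε x)) = φ x
    have h1 : e.symm (res.ε x) = Submodule.Quotient.mk x := by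
      apply e.injective
      rw [e.apply_symm_apply]
      show res.ε x = e (Submodule.Quotient.mk x)
      rfl
    rw [h1]
    rfl
  · rintro ⟨ψ, rfl⟩
    show (ψ ∘ₗ res.ε) ∘ₗ res.d 0 = 0
    rw [LinearMap.comp_assoc, eps_comp_d_zero, LinearMap.comp_zero]

lemma prec_eps_injective :
    Function.Injective (fun (ψ : C →ₗ[R] C) => ψ ∘ₗ res.ε) := by
  intro ψ₁ ψ₂ h
  refine LinearMap.ext fun c => ?_
  obtain ⟨x, rfl⟩ := res.hε c
  exact congrFun (congrArg (fun (ψ : _ →ₗ[R] C) => (ψ : _ → C)) h) x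

variable {I : Type} [AddCommGroup I] [Module R I]

/-- Tor-vanishing for `Hom(C, I)`, `I` injective, given `Ext` vanishing. -/
theorem tor_vanish_free (hI : Module.Injective R I)
    (hvanish : ∀ i : ℕ, 0 < i → Subsingleton (extGroup R C C i)) :
    TorVanish res (C →ₗ[R] I) := by
  intro n
  refine exact_of_squares
    (LinearMap.rTensor (C →ₗ[R] I) (res.d (n+1))) (LinearMap.rTensor (C →ₗ[R] I) (res.d n))
    (LinearMap.lcomp R I (LinearMap.lcomp R C (res.d (n+1))))
    (LinearMap.lcomp R I (LinearMap.lcomp R C (res.d n)))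
    (eta (R := R) (Fin (res.k (n+2)) → R) C I)
    (eta (R := R) (Fin (res.k (n+1)) → R) C I)
    (eta (R := R) (Fin (res.k n) → R) C I)
    (eta_bijective_pi C I _).2 (eta_bijective_pi C I _) (eta_bijective_pi C I _).1
    (eta_natural (res.d (n+1))) (eta_natural (res.d n)) ?_
  exact hom_inj_exact hI (LinearMap.lcomp R C (res.d n)) (LinearMap.lcomp R C (res.d (n+1)))
    (homres_exact res hvanish n)

/-- Bijectivity of `eta` at `C` itself, for `I` injective. -/
theorem etaC_bijective (res : FreeRes R C) (hI : Module.Injective R I) :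
    Function.Bijective (eta (R := R) C C I) := by
  refine bijective_of_cokernel_squares
    (LinearMap.rTensor (C →ₗ[R] I) (res.d 0)) (LinearMap.rTensor (C →ₗ[R] I) res.ε)
    (LinearMap.lcomp R I (LinearMap.lcomp R C (res.d 0)))
    (LinearMap.lcomp R I (LinearMap.lcomp R C res.ε))
    (rTensor_exact (C →ₗ[R] I) res.hd0 res.hε)
    (LinearMap.rTensor_surjective (C →ₗ[R] I) res.hε)
    (hom_inj_exact hI (LinearMap.lcomp R C res.ε) (LinearMap.lcomp R C (res.d 0))
      (hom_left_exact res))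
    (hom_inj_surj hI (LinearMap.lcomp R C res.ε) (prec_eps_injective res))
    (eta (R := R) (Fin (res.k 1) → R) C I)
    (eta (R := R) (Fin (res.k 0) → R) C I)
    (eta (R := R) C C I)
    (eta_bijective_pi C I _).2 (eta_bijective_pi C I _)
    (eta_natural (res.d 0)) (eta_natural res.ε)

/-- The evaluation map, as a composition through `eta`. -/
lemma ev_eq_comp :
    (ev C I : C ⊗[R] (C →ₗ[R] I) → I)
      = (fun (Ψ : R →ₗ[R] I) => Ψ 1)
        ∘ (fun (Φ : (C →ₗ[R] C) →ₗ[R] I) => Φ ∘ₗ (LinearMap.lsmul R C))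
        ∘ (eta (R := R) C C I) := by
  funext t
  induction t with
  | zero => simp only [map_zero, Function.comp_apply, LinearMap.zero_comp, LinearMap.zero_apply]
  | tmul c f =>
    show f c = (eta (R := R) C C I (c ⊗ₜ[R] f)) ((LinearMap.lsmul R C) 1)
    rw [eta_tmul]
    have : (LinearMap.lsmul R C 1) c = c := one_smul R c
    rw [this]
  | add t₁ t₂ h₁ h₂ =>
    simp only [Function.comp_apply] at h₁ h₂ ⊢
    simp only [map_add, LinearMap.add_comp, LinearMap.add_apply, h₁, h₂]

theorem ev_bijective (res : FreeRes R C) (hI : Module.Injective R I)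
    (hlsmul : Function.Bijective (LinearMap.lsmul R C)) :
    Function.Bijective (ev C I : C ⊗[R] (C →ₗ[R] I) → I) := by
  rw [ev_eq_comp]
  refine Function.Bijective.comp ?_ (Function.Bijective.comp ?_ (etaC_bijective res hI))
  · exact (LinearMap.ringLmapEquivSelf R R I).bijective
  · exact dual_bijective (LinearMap.lsmul R C) hlsmul

/-- The coevaluation `μ : M → Hom(C, C ⊗ M)`. -/
noncomputable abbrev mu (M : Type) [AddCommGroup M] [Module R M] :
    M →ₗ[R] (C →ₗ[R] (C ⊗[R] M)) :=
  (TensorProduct.mk R C M).flip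

lemma ev_comp_mu (f : C →ₗ[R] I) :
    (ev C I) ∘ₗ ((mu (R := R) (C := C) (C →ₗ[R] I)) f) = f :=
  LinearMap.ext fun _ => rfl

theorem muN_bijective (res : FreeRes R C) (hI : Module.Injective R I)
    (hlsmul : Function.Bijective (LinearMap.lsmul R C)) :
    Function.Bijective (mu (R := R) (C := C) (C →ₗ[R] I)) := by
  have hev := ev_bijective res hI hlsmul
  constructor
  · intro f₁ f₂ h
    rw [← ev_comp_mu f₁, ← ev_comp_mu f₂, h]
  · intro φ
    refine ⟨(ev C I) ∘ₗ φ, ?_⟩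
    apply postcomp_injective (ev C I) hev.1
    show (ev C I) ∘ₗ (mu (R := R) (C := C) (C →ₗ[R] I) ((ev C I) ∘ₗ φ)) = (ev C I) ∘ₗ φ
    rw [ev_comp_mu]

end Tor

section Snake

variable {R : Type} [CommRing R] {C : Type} [AddCommGroup C] [Module R C]
variable {M H Q : Type} [AddCommGroup M] [Module R M] [AddCommGroup H] [Module R H]
  [AddCommGroup Q] [Module R Q]

/-- If `Tor₁(C, Q) = 0` then tensoring the injection `M ↪ H` with `C` stays injective. -/
theorem tensor_inj (res : FreeRes R C) (f : M →ₗ[R] H) (g : H →ₗ[R] Q)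
    (hf : Function.Injective f) (hfg : Function.Exact f g) (hg : Function.Surjective g)
    (hQ1 : Function.Exact (LinearMap.rTensor Q (res.d 1)) (LinearMap.rTensor Q (res.d 0))) :
    Function.Injective (LinearMap.lTensor C f) := by
  have key : ∀ a : C ⊗[R] M, LinearMap.lTensor C f a = 0 → a = 0 := by
    intro a ha
    obtain ⟨x, hx⟩ := LinearMap.rTensor_surjective M (g := res.ε) res.hε a
    have h1 : LinearMap.rTensor H res.ε (LinearMap.lTensor _ f x) = 0 := by
      rw [rl_comm res.ε f x, hx, ha]
    obtain ⟨y, hy⟩ := (rTensor_exact H res.hd0 res.hε _).1 h1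
    have hgf : g ∘ₗ f = 0 := LinearMap.ext fun m => hfg.apply_apply_eq_zero m
    have h3 : LinearMap.rTensor Q (res.d 0) (LinearMap.lTensor _ g y) = 0 := by
      rw [rl_comm (res.d 0) g y, hy, ← LinearMap.comp_apply, ← LinearMap.lTensor_comp, hgf,
        LinearMap.lTensor_zero, LinearMap.zero_apply]
    obtain ⟨w, hw⟩ := (hQ1 _).1 h3
    obtain ⟨w', hw'⟩ := LinearMap.lTensor_surjective (Fin (res.k 2) → R) hg w
    have h5 : LinearMap.lTensor _ g (y - LinearMap.rTensor H (res.d 1) w') = 0 := by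
      rw [map_sub, ← rl_comm (res.d 1) g w', hw', hw, sub_self]
    obtain ⟨z, hz⟩ := (lTensor_exact (Fin (res.k 1) → R) hfg hg _).1 h5
    have h7 : LinearMap.lTensor _ f (LinearMap.rTensor M (res.d 0) z)
        = LinearMap.lTensor _ f x := by
      rw [← rl_comm (res.d 0) f z, hz, map_sub, hy]
      have : LinearMap.rTensor H (res.d 0) (LinearMap.rTensor H (res.d 1) w')
          = LinearMap.rTensor H (res.d 0 ∘ₗ res.d 1) w' := by
        rw [LinearMap.rTensor_comp]; rfl
      rw [this, d_comp_d_zero, LinearMap.rTensor_zero, LinearMap.zero_apply, sub_zero]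
    have h8 : LinearMap.rTensor M (res.d 0) z = x :=
      Module.Flat.lTensor_preserves_injective_linearMap (M := Fin (res.k 0) → R) f hf h7
    rw [← hx, ← h8]
    have : LinearMap.rTensor M res.ε (LinearMap.rTensor M (res.d 0) z)
        = LinearMap.rTensor M (res.ε ∘ₗ res.d 0) z := by
      rw [LinearMap.rTensor_comp]; rfl
    rw [this, eps_comp_d_zero, LinearMap.rTensor_zero, LinearMap.zero_apply]
  intro a b hab
  have := key (a - b) (by rw [map_sub, hab, sub_self])
  exact sub_eq_zero.mp this

/-- Tor-vanishing passes to the kernel of a surjection between Tor-vanishing modules. -/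
theorem torvanish_ses (res : FreeRes R C) (f : M →ₗ[R] H) (g : H →ₗ[R] Q)
    (hf : Function.Injective f) (hfg : Function.Exact f g) (hg : Function.Surjective g)
    (hH : TorVanish res H) (hQ : TorVanish res Q) : TorVanish res M := by
  intro n
  intro x
  constructor
  · intro hx
    have hgf : g ∘ₗ f = 0 := LinearMap.ext fun m => hfg.apply_apply_eq_zero m
    have h1 : LinearMap.rTensor H (res.d n) (LinearMap.lTensor _ f x) = 0 := by
      rw [rl_comm (res.d n) f x, hx, map_zero]
    obtain ⟨y, hy⟩ := (hH n _).1 h1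
    have h3 : LinearMap.rTensor Q (res.d (n+1)) (LinearMap.lTensor _ g y) = 0 := by
      rw [rl_comm (res.d (n+1)) g y, hy, ← LinearMap.comp_apply, ← LinearMap.lTensor_comp, hgf,
        LinearMap.lTensor_zero, LinearMap.zero_apply]
    obtain ⟨w, hw⟩ := (hQ (n+1) _).1 h3
    obtain ⟨w', hw'⟩ := LinearMap.lTensor_surjective (Fin (res.k (n+3)) → R) hg w
    have h5 : LinearMap.lTensor _ g (y - LinearMap.rTensor H (res.d (n+2)) w') = 0 := by
      rw [map_sub, ← rl_comm (res.d (n+2)) g w', hw', hw, sub_self]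
    obtain ⟨z, hz⟩ := (lTensor_exact (Fin (res.k (n+2)) → R) hfg hg _).1 h5
    have h7 : LinearMap.lTensor _ f (LinearMap.rTensor M (res.d (n+1)) z)
        = LinearMap.lTensor _ f x := by
      rw [← rl_comm (res.d (n+1)) f z, hz, map_sub, hy]
      have : LinearMap.rTensor H (res.d (n+1)) (LinearMap.rTensor H (res.d (n+2)) w')
          = LinearMap.rTensor H (res.d (n+1) ∘ₗ res.d (n+2)) w' := by
        rw [LinearMap.rTensor_comp]; rfl
      rw [this, d_comp_d_zero, LinearMap.rTensor_zero, LinearMap.zero_apply, sub_zero]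
    have h8 : LinearMap.rTensor M (res.d (n+1)) z = x :=
      Module.Flat.lTensor_preserves_injective_linearMap
        (M := Fin (res.k (n+1)) → R) f hf h7
    exact ⟨z, h8⟩
  · rintro ⟨z, rfl⟩
    have : LinearMap.rTensor M (res.d n) (LinearMap.rTensor M (res.d (n+1)) z)
        = LinearMap.rTensor M (res.d n ∘ₗ res.d (n+1)) z := by
      rw [LinearMap.rTensor_comp]; rfl
    rw [this, d_comp_d_zero, LinearMap.rTensor_zero, LinearMap.zero_apply]

/-- The four-lemma giving bijectivity of the left vertical `μ`. -/
theorem bijective_of_kernel_squares {A B D : Type}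
    [AddCommGroup A] [Module R A] [AddCommGroup B] [Module R B] [AddCommGroup D] [Module R D]
    (f : M →ₗ[R] H) (g : H →ₗ[R] Q) (u : A →ₗ[R] B) (v : B →ₗ[R] D)
    (α : M →ₗ[R] A) (β : H →ₗ[R] B) (γ : Q →ₗ[R] D)
    (hf : Function.Injective f) (hfg : Function.Exact f g)
    (hu : Function.Injective u) (hvu : ∀ a, v (u a) = 0)
    (hβ : Function.Bijective β) (hγ : Function.Injective γ)
    (sq1 : u ∘ₗ α = β ∘ₗ f) (sq2 : v ∘ₗ β = γ ∘ₗ g) :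
    Function.Bijective α := by
  have sq1' : ∀ m, u (α m) = β (f m) := fun m =>
    congrFun (congrArg (fun (ψ : M →ₗ[R] B) => (ψ : M → B)) sq1) m
  have sq2' : ∀ h, v (β h) = γ (g h) := fun h =>
    congrFun (congrArg (fun (ψ : H →ₗ[R] D) => (ψ : H → D)) sq2) h
  constructor
  · intro m₁ m₂ hm
    apply hf
    apply hβ.1
    rw [← sq1' m₁, ← sq1' m₂, hm]
  · intro φ
    obtain ⟨h, hh⟩ := hβ.2 (u φ)
    have hgh : γ (g h) = 0 := by
      rw [← sq2' h, hh, hvu]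
    have : g h = 0 := by
      apply hγ
      rw [hgh, map_zero]
    obtain ⟨m, hm⟩ := (hfg h).1 this
    refine ⟨m, hu ?_⟩
    rw [sq1' m, hm, hh]

end Snake

section Main

open TensorProduct LinearMap

variable {R : Type} [CommRing R] {C : Type} [AddCommGroup C] [Module R C]

/-- The main induction: modules of finite `C`-injective dimension lie in the Auslander class. -/
theorem main_induction (res : FreeRes R C)
    (hlsmul : Function.Bijective (LinearMap.lsmul R C))
    (hvanish : ∀ i : ℕ, 0 < i → Subsingleton (extGroup R C C i)) :
    ∀ (n : ℕ) (M : Type) [iM : AddCommGroup M] [jM : Module R M],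
      CidLE R C n M iM jM →
      Function.Bijective (mu (R := R) (C := C) M) ∧
      (∃ m : ℕ, idLE R m (C ⊗[R] M) inferInstance inferInstance) ∧
      TorVanish res M := by
  intro n
  induction n with
  | zero =>
    intro M iM jM h
    obtain ⟨I, iI, jI, hI, ⟨e⟩⟩ := h
    have hevb := ev_bijective res hI hlsmul
    have hμN := muN_bijective res hI hlsmul
    have heT : Function.Bijective (LinearMap.lTensor C (e : M →ₗ[R] (C →ₗ[R] I))) :=
      lTensor_bijective_of_bijective C _ e.bijective
    have hsq : ∀ m : M, (LinearMap.lTensor C (e : M →ₗ[R] (C →ₗ[R] I))) ∘ₗ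
        ((mu (R := R) (C := C) M) m) = (mu (R := R) (C := C) (C →ₗ[R] I)) (e m) :=
      fun m => LinearMap.ext fun c => rfl
    refine ⟨⟨?_, ?_⟩, ?_, ?_⟩
    · -- injectivity of μ_M
      intro m₁ m₂ hm
      apply e.injective
      apply hμN.1
      rw [← hsq m₁, ← hsq m₂, hm]
    · -- surjectivity of μ_M
      intro φ
      obtain ⟨ψ, hψ⟩ := hμN.2 ((LinearMap.lTensor C (e : M →ₗ[R] (C →ₗ[R] I))) ∘ₗ φ)
      refine ⟨e.symm ψ, ?_⟩
      apply postcomp_injective _ heT.1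
      show (LinearMap.lTensor C (e : M →ₗ[R] (C →ₗ[R] I))) ∘ₗ
        ((mu (R := R) (C := C) M) (e.symm ψ)) = (LinearMap.lTensor C _) ∘ₗ φ
      rw [hsq (e.symm ψ), e.apply_symm_apply, hψ]
    · -- injective dimension 0
      refine ⟨0, ?_⟩
      have e2 : (C ⊗[R] M) ≃ₗ[R] I :=
        (LinearEquiv.lTensor C e).trans (LinearEquiv.ofBijective (ev C I) hevb)
      exact injective_of_equiv e2.symm hI
    · -- Tor vanishing
      have hTN := tor_vanish_free res hI hvanish
      intro n
      refine exact_of_squares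
        (LinearMap.rTensor M (res.d (n+1))) (LinearMap.rTensor M (res.d n))
        (LinearMap.rTensor (C →ₗ[R] I) (res.d (n+1))) (LinearMap.rTensor (C →ₗ[R] I) (res.d n))
        (LinearMap.lTensor _ (e : M →ₗ[R] (C →ₗ[R] I)))
        (LinearMap.lTensor _ (e : M →ₗ[R] (C →ₗ[R] I)))
        (LinearMap.lTensor _ (e : M →ₗ[R] (C →ₗ[R] I)))
        (lTensor_bijective_of_bijective _ _ e.bijective).2
        (lTensor_bijective_of_bijective _ _ e.bijective)
        (lTensor_bijective_of_bijective _ _ e.bijective).1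
        ?_ ?_ (hTN n)
      · exact (LinearMap.lTensor_comp_rTensor _ (res.d (n+1)) _).trans
          (LinearMap.rTensor_comp_lTensor _ (res.d (n+1)) _).symm
      · exact (LinearMap.lTensor_comp_rTensor _ (res.d n) _).trans
          (LinearMap.rTensor_comp_lTensor _ (res.d n) _).symm
  | succ n ih =>
    intro M iM jM h
    obtain ⟨I, iI, jI, f, hI, hfinj, hq⟩ := h
    set g := (LinearMap.range f).mkQ with hgdef
    have hfg : Function.Exact f g := by
      rw [LinearMap.exact_iff]
      exact Submodule.ker_mkQ _
    have hg : Function.Surjective g := Submodule.mkQ_surjective _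
    obtain ⟨hμQ, hidQ, hTQ⟩ := ih ((C →ₗ[R] I) ⧸ LinearMap.range f) hq
    have hTN := tor_vanish_free res hI hvanish
    have hTf : Function.Injective (LinearMap.lTensor C f) :=
      tensor_inj res f g hfinj hfg hg (hTQ 0)
    have hTM : TorVanish res M := torvanish_ses res f g hfinj hfg hg hTN hTQ
    have hμN := muN_bijective res hI hlsmul
    have hcols : Function.Exact (LinearMap.lTensor C f) (LinearMap.lTensor C g) :=
      lTensor_exact C hfg hg
    have hcolsurj : Function.Surjective (LinearMap.lTensor C g) := lTensor_surjective C hg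
    have hgf : g ∘ₗ f = 0 := LinearMap.ext fun m => hfg.apply_apply_eq_zero m
    have hμM : Function.Bijective (mu (R := R) (C := C) M) := by
      refine bijective_of_kernel_squares f g
        (LinearMap.llcomp R C _ _ (LinearMap.lTensor C f))
        (LinearMap.llcomp R C _ _ (LinearMap.lTensor C g))
        (mu (R := R) (C := C) M) (mu (R := R) (C := C) (C →ₗ[R] I))
        (mu (R := R) (C := C) ((C →ₗ[R] I) ⧸ LinearMap.range f))
        hfinj hfg (postcomp_injective _ hTf) ?_ hμN hμQ.1 ?_ ?_
      · intro φ
        refine LinearMap.ext fun c => ?_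
        show LinearMap.lTensor C g (LinearMap.lTensor C f (φ c)) = 0
        rw [← LinearMap.comp_apply, ← LinearMap.lTensor_comp, hgf, LinearMap.lTensor_zero,
          LinearMap.zero_apply]
      · exact LinearMap.ext fun m => LinearMap.ext fun c => rfl
      · exact LinearMap.ext fun h' => LinearMap.ext fun c => rfl
    refine ⟨hμM, ?_, hTM⟩
    -- injective dimension
    obtain ⟨m, hm⟩ := hidQ
    have hevb := ev_bijective res hI hlsmul
    set e2 := LinearEquiv.ofBijective (ev C I) hevb with he2
    set fM : C ⊗[R] M →ₗ[R] I := e2.toLinearMap ∘ₗ (LinearMap.lTensor C f) with hfMdef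
    have hfM : Function.Injective fM := fun a b hab => hTf (e2.injective hab)
    set s : I →ₗ[R] (C ⊗[R] ((C →ₗ[R] I) ⧸ LinearMap.range f)) :=
      (LinearMap.lTensor C g) ∘ₗ e2.symm.toLinearMap with hsdef
    have hs : Function.Surjective s := by
      intro q
      obtain ⟨t, ht⟩ := hcolsurj q
      refine ⟨e2 t, ?_⟩
      show LinearMap.lTensor C g (e2.symm (e2 t)) = q
      rw [e2.symm_apply_apply]
      exact ht
    have hker : LinearMap.ker s = LinearMap.range fM := by
      ext x
      constructor
      · intro hx
        have hx' : LinearMap.lTensor C g (e2.symm x) = 0 := hx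
        obtain ⟨t, ht⟩ := (hcols (e2.symm x)).1 hx'
        refine ⟨t, ?_⟩
        show e2 (LinearMap.lTensor C f t) = x
        rw [ht, e2.apply_symm_apply]
      · rintro ⟨t, rfl⟩
        show LinearMap.lTensor C g (e2.symm (e2 (LinearMap.lTensor C f t))) = 0
        rw [e2.symm_apply_apply, ← LinearMap.comp_apply, ← LinearMap.lTensor_comp, hgf,
          LinearMap.lTensor_zero, LinearMap.zero_apply]
    have eqQ : (I ⧸ LinearMap.range fM) ≃ₗ[R]
        (C ⊗[R] ((C →ₗ[R] I) ⧸ LinearMap.range f)) :=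
      (Submodule.quotEquivOfEq _ _ hker.symm).trans (s.quotKerEquivOfSurjective hs)
    refine ⟨m + 1, ?_⟩
    exact ⟨I, iI, jI, fM, hI, hfM, idLE_congr m _ _ _ _ _ _ eqQ.symm hm⟩

end Main

end AuxSemidual

/-- If `C` is semidualizing and `M` is finitely generated of finite `C`-injective dimension
over a noetherian local ring, then `C ⊗_R M` is finitely generated of finite injective
dimension, the coevaluation map `M → Hom_R(C, C ⊗_R M)` is an isomorphism, and `C ⊗_R M ≠ 0`
whenever `M ≠ 0`. -/
theorem finite_Cid_mem_Auslander_class (R : Type) [CommRing R] [IsNoetherianRing R] [IsLocalRing R]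
    (C : Type) [AddCommGroup C] [Module R C] (hC : IsSemidualizing R C)
    (M : Type) [AddCommGroup M] [Module R M] [Module.Finite R M]
    (hCid : ∃ n : ℕ, CidLE R C n M inferInstance inferInstance) :
    Module.Finite R (TensorProduct R C M) ∧
    (∃ n : ℕ, idLE R n (TensorProduct R C M) inferInstance inferInstance) ∧
    Function.Bijective ((TensorProduct.mk R C M).flip) ∧
    (Nontrivial M → Nontrivial (TensorProduct R C M)) := by
  classical
  obtain ⟨hfin, hlsmul, hvanish⟩ := hC
  haveI := hfin
  obtain ⟨n, hn⟩ := hCid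
  obtain ⟨hμ, hid, hT⟩ :=
    AuxSemidual.main_induction (AuxSemidual.freeRes R C) hlsmul hvanish n M hn
  refine ⟨inferInstance, hid, hμ, ?_⟩
  intro hMnt
  by_contra hcon
  rw [not_nontrivial_iff_subsingleton] at hcon
  obtain ⟨a, b, hab⟩ := hMnt
  exact hab (hμ.1 (Subsingleton.elim _ _))
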